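/- For each n ≥ 0 and k ≥ 2, the list F(n,k), defined by F(n,k) = C(n) for 0 ≤ n < k and F(n,k) = 1·reverse(F(n-1,k)) ∘ 01·reverse(F(n-2,k)) ∘ ... ∘ 0^(k-1)1·reverse(F(n-k,k)) for n ≥ k (where C(0) = (λ), C(n) = 1·reverse(C(n-1)) ∘ 0·C(n-1)), contains exactly the binary strings of length n avoiding k consecutive 0's, each exactly once. -/

import Mathlib

/-- The binary reflected Gray code `C(n)` (strings over `{0,1} ⊆ ℕ`):
`C(0) = (λ)`, `C(n) = 1·reverse(C(n-1)) ∘ 0·C(n-1)`. -/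
def C : ℕ → List (List ℕ)
  | 0 => [[]]
  | n+1 => (C n).reverse.map (fun w => 1 :: w) ++ (C n).map (fun w => 0 :: w)

/-- The Gray code list `F(n,k)` of binary strings avoiding `k` consecutive `0`'s:
`F(n,k) = C(n)` for `n < k`, and for `n ≥ k`,
`F(n,k) = 1·reverse(F(n-1,k)) ∘ 01·reverse(F(n-2,k)) ∘ ⋯ ∘ 0^(k-1)1·reverse(F(n-k,k))`. -/
def F (k : ℕ) : ℕ → List (List ℕ)
  | n =>
    if h : n < k ∨ k = 0 then C n
    else ((List.range k).map (fun j =>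
      (F k (n - (j+1))).reverse.map (fun w => List.replicate j 0 ++ 1 :: w))).flatten
termination_by n => n
decreasing_by push_neg at h; omega

lemma C_spec (n : ℕ) : (C n).Nodup ∧ ∀ w, w ∈ C n ↔ (w.length = n ∧ ∀ b ∈ w, b ≤ 1) := by
  induction n with
  | zero =>
    constructor
    · simp [C]
    · intro w
      simp only [C, List.mem_singleton]
      constructor
      · rintro rfl; simp
      · rintro ⟨h1, h2⟩; exact List.eq_nil_of_length_eq_zero h1
  | succ n ih =>
    obtain ⟨hnd, hmem⟩ := ih
    constructor
    · rw [C, List.nodup_append]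
      refine ⟨(List.nodup_reverse.2 hnd).map fun a b h => by injection h,
        hnd.map fun a b h => by injection h, ?_⟩
      intro x hx y hy hxy; subst hxy
      simp only [List.mem_map, List.mem_reverse] at hx hy
      obtain ⟨a, _, rfl⟩ := hx
      obtain ⟨b, _, hb⟩ := hy
      injection hb with h1 _
      omega
    · intro w
      rw [C]
      simp only [List.mem_append, List.mem_map, List.mem_reverse]
      constructor
      · rintro (⟨v, hv, rfl⟩ | ⟨v, hv, rfl⟩) <;>
          · obtain ⟨h1, h2⟩ := (hmem v).1 hv
            refine ⟨by simp [h1], ?_⟩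
            intro b hb
            rcases List.mem_cons.1 hb with rfl | hb
            · omega
            · exact h2 b hb
      · rintro ⟨h1, h2⟩
        cases w with
        | nil => simp at h1
        | cons b v =>
          have hb : b ≤ 1 := h2 b (List.mem_cons_self)
          have hv : v ∈ C n := (hmem v).2 ⟨by simpa using h1,
            fun c hc => h2 c (List.mem_cons_of_mem _ hc)⟩
          interval_cases b
          · exact Or.inr ⟨v, hv, rfl⟩
          · exact Or.inl ⟨v, hv, rfl⟩

lemma F_lt {k n : ℕ} (h : n < k) : F k n = C n := by
  rw [F]; exact dif_pos (Or.inl h)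

lemma F_ge {k n : ℕ} (hk : k ≠ 0) (h : k ≤ n) :
    F k n = ((List.range k).map (fun j =>
      (F k (n - (j+1))).reverse.map (fun w => List.replicate j 0 ++ 1 :: w))).flatten := by
  rw [F]; rw [dif_neg]; push_neg; exact ⟨by omega, hk⟩

lemma uniq {j j' : ℕ} {v v' : List ℕ} :
    List.replicate j 0 ++ 1 :: v = List.replicate j' 0 ++ 1 :: v' → j = j' ∧ v = v' := by
  induction j generalizing j' with
  | zero =>
    cases j' with
    | zero => intro h; simp_all
    | succ m => intro h; simp only [List.replicate_succ, List.replicate_zero,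
        List.nil_append, List.cons_append] at h; injection h with h1 _; omega
  | succ m ih =>
    cases j' with
    | zero => intro h; simp only [List.replicate_succ, List.replicate_zero,
        List.nil_append, List.cons_append] at h; injection h with h1 _; omega
    | succ m' =>
      intro h
      simp only [List.replicate_succ, List.cons_append] at h
      injection h with _ h2
      obtain ⟨h3, h4⟩ := ih h2
      exact ⟨by omega, h4⟩

lemma avoid_aux {k : ℕ} {v : List ℕ} (s : List ℕ) :
    ∀ j, j < k → ∀ t, s ++ List.replicate k 0 ++ t = List.replicate j 0 ++ 1 :: v →
      List.replicate k 0 <:+: v := by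
  induction s with
  | nil =>
    intro j hj t h
    simp only [List.nil_append] at h
    have hrep : List.replicate k (0:ℕ) = List.replicate j 0 ++ List.replicate (k - j) 0 := by
      rw [← List.replicate_add]; congr 1; omega
    rw [hrep, List.append_assoc] at h
    have h2 := List.append_cancel_left h
    have hkj : k - j = (k - j - 1) + 1 := by omega
    rw [hkj, List.replicate_succ, List.cons_append] at h2
    injection h2 with h3 _
    omega
  | cons a s' ih =>
    intro j hj t h
    cases j with
    | zero =>
      simp only [List.replicate_zero, List.nil_append, List.cons_append] at h
      injection h with _ h2
      exact ⟨s', t, by simpa using h2⟩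
    | succ m =>
      rw [List.replicate_succ] at h
      simp only [List.cons_append] at h
      injection h with _ h2
      exact ih m (by omega) t h2

/-- prepending `0^j 1` with `j < k` preserves avoidance. -/
lemma avoid_cons {k j : ℕ} {v : List ℕ} (hj : j < k)
    (hv : ¬ List.replicate k 0 <:+: v) :
    ¬ List.replicate k (0:ℕ) <:+: (List.replicate j 0 ++ 1 :: v) := by
  rintro ⟨s, t, h⟩
  exact hv (avoid_aux s j hj t h)

lemma decomp_exists {w : List ℕ} (hb : ∀ b ∈ w, b ≤ 1)
    (hne : w ≠ List.replicate w.length 0) :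
    ∃ j v, w = List.replicate j 0 ++ 1 :: v := by
  induction w with
  | nil => simp at hne
  | cons a w' ih =>
    have ha : a ≤ 1 := hb a (List.mem_cons_self)
    interval_cases a
    · have hne' : w' ≠ List.replicate w'.length 0 := by
        intro h; apply hne; simp [List.replicate_succ, ← h]
      obtain ⟨j, v, rfl⟩ := ih (fun b hb' => hb b (List.mem_cons_of_mem _ hb')) hne'
      exact ⟨j + 1, v, by simp [List.replicate_succ]⟩
    · exact ⟨0, w', by simp⟩

/-- `F(n,k)` contains exactly the binary strings of length `n` avoiding `k`
consecutive `0`'s, each exactly once. -/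
theorem stmt11 (k n : ℕ) (hk : 2 ≤ k) :
    (F k n).Nodup ∧
    ∀ w : List ℕ, w ∈ F k n ↔
      (w.length = n ∧ (∀ b ∈ w, b ≤ 1) ∧ ¬ (List.replicate k 0 <:+: w)) := by
  induction n using Nat.strong_induction_on with
  | _ n IH =>
  by_cases hn : n < k
  · rw [F_lt hn]
    obtain ⟨h1, h2⟩ := C_spec n
    refine ⟨h1, fun w => ?_⟩
    rw [h2 w]
    constructor
    · rintro ⟨hl, hb⟩
      refine ⟨hl, hb, fun hinf => ?_⟩
      have := hinf.length_le
      simp [hl] at this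
      omega
    · rintro ⟨hl, hb, _⟩; exact ⟨hl, hb⟩
  · push_neg at hn
    rw [F_ge (by omega) hn]
    have hIH : ∀ j < k, (F k (n - (j+1))).Nodup ∧
        ∀ w, w ∈ F k (n - (j+1)) ↔ (w.length = n - (j+1) ∧ (∀ b ∈ w, b ≤ 1) ∧
          ¬ List.replicate k 0 <:+: w) := fun j hj => IH _ (by omega)
    constructor
    · rw [List.nodup_flatten]
      constructor
      · intro l hl
        simp only [List.mem_map, List.mem_range] at hl
        obtain ⟨j, hj, rfl⟩ := hl
        exact (List.nodup_reverse.2 (hIH j hj).1).map fun a b h => (uniq h).2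
      · rw [List.pairwise_map]
        refine (List.pairwise_lt_range : List.Pairwise (· < ·) (List.range k)).imp ?_
        intro i j hij x hxi hxj
        simp only [List.mem_map, List.mem_reverse] at hxi hxj
        obtain ⟨a, _, rfl⟩ := hxi
        obtain ⟨b, _, hb⟩ := hxj
        have := (uniq hb.symm).1
        omega
    · intro w
      rw [List.mem_flatten]
      constructor
      · rintro ⟨l, hlmem, hw⟩
        obtain ⟨j, hjr, rfl⟩ := List.mem_map.1 hlmem
        have hj : j < k := List.mem_range.1 hjr
        obtain ⟨v, hvr, rfl⟩ := List.mem_map.1 hw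
        have hv := List.mem_reverse.1 hvr
        obtain ⟨hl, hb, ha⟩ := ((hIH j hj).2 v).1 hv
        refine ⟨?_, ?_, avoid_cons hj ha⟩
        · simp [hl]; omega
        · intro b hbm
          simp only [List.mem_append, List.mem_replicate, List.mem_cons] at hbm
          rcases hbm with ⟨_, rfl⟩ | rfl | h
          · omega
          · omega
          · exact hb b h
      · rintro ⟨hl, hb, ha⟩
        have hne : w ≠ List.replicate w.length 0 := by
          intro hw0
          apply ha
          refine (List.IsPrefix.isInfix ?_)
          rw [hw0, hl]
          exact ⟨List.replicate (n - k) 0, by rw [← List.replicate_add]; congr 1; omega⟩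
        obtain ⟨j, v, rfl⟩ := decomp_exists hb hne
        have hjk : j < k := by
          by_contra hjk
          push_neg at hjk
          apply ha
          refine List.IsPrefix.isInfix ?_
          refine List.IsPrefix.trans ?_ (List.prefix_append _ _)
          exact ⟨List.replicate (j - k) 0, by rw [← List.replicate_add]; congr 1; omega⟩
        have hlv : v.length = n - (j+1) := by
          simp at hl; omega
        have hav : ¬ List.replicate k 0 <:+: v := by
          intro h
          exact ha (h.trans ⟨List.replicate j 0 ++ [1], [], by simp⟩)
        have hvmem : v ∈ F k (n - (j+1)) := ((hIH j hjk).2 v).2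
          ⟨hlv, fun b hbm => hb b (by simp [hbm]), hav⟩
        exact ⟨_, List.mem_map.2 ⟨j, List.mem_range.2 hjk, rfl⟩,
          List.mem_map.2 ⟨v, List.mem_reverse.2 hvmem, rfl⟩⟩
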